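/- Every ordered graph F on k vertices that does not contain a monotone path of length two satisfies ρ_<(F) ≤ ρ_<(H_k). -/

import Mathlib

open scoped Classical

/-- `G` contains an ordered copy of `F`: a strictly order-preserving map
sending edges to edges. -/
def ContainsOrderedCopy {α β : Type*} [Preorder α] [Preorder β]
    (F : SimpleGraph α) (G : SimpleGraph β) : Prop :=
  ∃ φ : α → β, StrictMono φ ∧ ∀ u v, F.Adj u v → G.Adj (φ u) (φ v)

/-- The number of edges of a simple graph. -/
noncomputable def edgeCount {α : Type*} (G : SimpleGraph α) : ℕ := G.edgeSet.ncard

/-- `ρ_<(F, G)`: the largest edge-density of an `F`-free (ordered) subgraph of `G`. -/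
noncomputable def relTuranDensityIn {α β : Type*} [Preorder α] [Preorder β]
    (F : SimpleGraph α) (G : SimpleGraph β) : ℝ :=
  sSup {r : ℝ | ∃ G' : G.Subgraph, ¬ ContainsOrderedCopy F G'.coe ∧
    r = (edgeCount G'.coe : ℝ) / (edgeCount G : ℝ)}

/-- `ρ_<(F)`: the relative Turán density of an ordered graph `F`, the infimum of
`ρ_<(F, G)` over all finite ordered graphs `G` with at least one edge. -/
noncomputable def relTuranDensity {α : Type*} [Preorder α] (F : SimpleGraph α) : ℝ :=
  sInf {r : ℝ | ∃ (n : ℕ) (G : SimpleGraph (Fin n)),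
    1 ≤ edgeCount G ∧ r = relTuranDensityIn F G}

/-- The cube `{0,1}^d`, ordered lexicographically (index `0` most significant). -/
abbrev Cube (d : ℕ) := Lex (Fin d → Bool)

noncomputable instance (priority := 2000) (d : ℕ) : LinearOrder (Cube d) :=
  haveI : WellFoundedLT (Fin d) := inferInstance
  inferInstance

instance instFintypeLexSelf {α : Type*} [Fintype α] : Fintype (Lex α) := ‹Fintype α›

/-- `δ(x, y) = ℓ`, with positions `1`-indexed: the least (1-indexed) coordinate at which
`x` and `y` differ is `ℓ`. -/
def atLevel {d : ℕ} (ℓ : ℕ) (x y : Cube d) : Prop :=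
  ∃ i : Fin d, (i : ℕ) + 1 = ℓ ∧ ofLex x i ≠ ofLex y i ∧ ∀ j < i, ofLex x j = ofLex y j

/-- `e_ℓ(G)`: the number of level-`ℓ` edges of a graph `G` on `{0,1}^d`. -/
noncomputable def levelCount {d : ℕ} (G : SimpleGraph (Cube d)) (ℓ : ℕ) : ℕ :=
  {p : Cube d × Cube d | p.1 < p.2 ∧ G.Adj p.1 p.2 ∧ atLevel ℓ p.1 p.2}.ncard

/-- `τ_{ℓ,d} = 2 ^ (2d - ℓ - 1)`. -/
def tau (d ℓ : ℕ) : ℕ := 2 ^ (2 * d - ℓ - 1)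

/-- The level `ℓ` is `α`-rich with respect to `G`, i.e. `e_ℓ(G) ≥ α · τ_{ℓ,d}`. -/
def IsRichLevel {d : ℕ} (G : SimpleGraph (Cube d)) (α : ℝ) (ℓ : ℕ) : Prop :=
  α * (tau d ℓ : ℝ) ≤ (levelCount G ℓ : ℝ)

/-- `G` is `(α, C)`-rich: at least `C` levels `ℓ ∈ [d]` are `α`-rich. -/
def IsRichGraph {d : ℕ} (G : SimpleGraph (Cube d)) (α C : ℝ) : Prop :=
  C ≤ ({ℓ : ℕ | ℓ ∈ Finset.Icc 1 d ∧ IsRichLevel G α ℓ}.ncard : ℝ)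

/-- The vertex set `{0,1}^d × [m]`, ordered lexicographically. -/
abbrev BlockVert (d m : ℕ) := Lex (Cube d × Fin m)

/-- `e_ℓ(R)` for a graph `R` on `{0,1}^d × [m]`: the number of edges whose endpoints lie in
blocks `B_x`, `B_y` with `δ(x,y) = ℓ`. -/
noncomputable def levelCountB {d m : ℕ} (R : SimpleGraph (BlockVert d m)) (ℓ : ℕ) : ℕ :=
  {p : BlockVert d m × BlockVert d m |
    p.1 < p.2 ∧ R.Adj p.1 p.2 ∧ atLevel ℓ (ofLex p.1).1 (ofLex p.2).1}.ncard

/-- Property (i) with accuracy `ε`: every level `ℓ ∈ [d]` has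
`(1−ε)·2^(d−1)·m² ≤ e_ℓ(R) ≤ (1+ε)·2^(d−1)·m²`. -/
def PropI {d m : ℕ} (R : SimpleGraph (BlockVert d m)) (ε : ℝ) : Prop :=
  ∀ ℓ ∈ Finset.Icc 1 d,
    (1 - ε) * 2 ^ (d - 1) * (m : ℝ) ^ 2 ≤ (levelCountB R ℓ : ℝ) ∧
    (levelCountB R ℓ : ℝ) ≤ (1 + ε) * 2 ^ (d - 1) * (m : ℝ) ^ 2

/-- Property (ii) with accuracy `ε`: for all distinct `x, y ∈ {0,1}^d` (say `δ(x,y) = ℓ`) and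
all `P ⊆ B_x`, `Q ⊆ B_y` of size at least `m^(2/3)`, the number of edges of `R` between `P`
and `Q` is at most `(1+ε)·2^(−d+ℓ)·|P|·|Q|`. -/
def PropII {d m : ℕ} (R : SimpleGraph (BlockVert d m)) (ε : ℝ) : Prop :=
  ∀ (x y : Cube d) (ℓ : ℕ), atLevel ℓ x y →
    ∀ P Q : Finset (Fin m),
      (m : ℝ) ^ ((2 : ℝ)/3) ≤ (P.card : ℝ) → (m : ℝ) ^ ((2 : ℝ)/3) ≤ (Q.card : ℝ) →
      ({pq : Fin m × Fin m | pq.1 ∈ P ∧ pq.2 ∈ Q ∧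
          R.Adj (toLex (x, pq.1)) (toLex (y, pq.2))}.ncard : ℝ) ≤
        (1 + ε) * 2 ^ ((ℓ : ℤ) - (d : ℤ)) * (P.card : ℝ) * (Q.card : ℝ)

/-- `F` contains a monotone path of length two: vertices `u < v < w` with
`uv, vw ∈ E(F)`. -/
def HasMonotonePathTwo {α : Type*} [Preorder α] (F : SimpleGraph α) : Prop :=
  ∃ u v w, u < v ∧ v < w ∧ F.Adj u v ∧ F.Adj v w

/-- The ordered graph `H_k` on `[k] × {0,1}` (ordered lexicographically), with edges
`(x,0)(y,1)` for `x ≤ y`. -/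
def Hgraph (k : ℕ) : SimpleGraph (Lex (Fin k × Bool)) :=
  SimpleGraph.fromRel (fun a b =>
    (ofLex a).2 = false ∧ (ofLex b).2 = true ∧ (ofLex a).1 ≤ (ofLex b).1)

/-- Containment of ordered copies is transitive. -/
lemma containsOrderedCopy_trans {α β γ : Type*} [Preorder α] [Preorder β] [Preorder γ]
    {F : SimpleGraph α} {H : SimpleGraph β} {G : SimpleGraph γ}
    (h1 : ContainsOrderedCopy F H) (h2 : ContainsOrderedCopy H G) :
    ContainsOrderedCopy F G := by
  obtain ⟨φ, hφ, he⟩ := h1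
  obtain ⟨ψ, hψ, he'⟩ := h2
  exact ⟨ψ ∘ φ, hψ.comp hφ, fun u v h => he' _ _ (he u v h)⟩

/-- Any ordered graph on `k` vertices with no monotone path of length two is contained
in `H_k`. -/
lemma containsOrderedCopy_Hgraph {α : Type*} [Fintype α] [LinearOrder α] (F : SimpleGraph α)
    (k : ℕ) (hk : Fintype.card α = k) (hF : ¬ HasMonotonePathTwo F) :
    ContainsOrderedCopy F (Hgraph k) := by
  set e : α ≃o Fin k := (monoEquivOfFin α hk).symm with he
  set b : α → Bool := fun v => if (∃ u, u < v ∧ F.Adj u v) then true else false with hb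
  refine ⟨fun v => toLex (e v, b v), ?_, ?_⟩
  · intro u v huv
    exact Prod.Lex.lt_iff.mpr (Or.inl (e.strictMono huv))
  · have key : ∀ u v, u < v → F.Adj u v →
        (Hgraph k).Adj (toLex (e u, b u)) (toLex (e v, b v)) := by
      intro u v huv hadj
      have hbu : b u = false := by
        have hn : ¬ ∃ w, w < u ∧ F.Adj w u := by
          rintro ⟨w, hwu, hadjw⟩
          exact hF ⟨w, u, v, hwu, huv, hadjw, hadj⟩
        simp only [hb]
        rw [if_neg hn]
      have hbv : b v = true := by
        have hp : ∃ w, w < v ∧ F.Adj w v := ⟨u, huv, hadj⟩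
        simp only [hb]
        rw [if_pos hp]
      rw [Hgraph, SimpleGraph.fromRel_adj]
      constructor
      · intro hcontra
        have : e u = e v := congrArg (fun x => (ofLex x).1) hcontra
        exact absurd (e.injective this) (ne_of_lt huv)
      · left
        simp [ofLex_toLex, hbu, hbv, le_of_lt (e.strictMono huv)]
    intro u v hadj
    rcases lt_or_gt_of_ne hadj.ne with h | h
    · exact key u v h hadj
    · exact (key v u h hadj.symm).symm

/-- A subgraph has at most as many edges as the ambient graph. -/
lemma edgeCount_subgraph_le {β : Type*} [Fintype β] (G : SimpleGraph β) (G' : G.Subgraph) :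
    edgeCount G'.coe ≤ edgeCount G := by
  classical
  unfold edgeCount
  have hmap : (Sym2.map (Subtype.val : G'.verts → β)) '' G'.coe.edgeSet ⊆ G.edgeSet := by
    rintro x ⟨y, hy, rfl⟩
    induction y with
    | h p q =>
      simp only [SimpleGraph.mem_edgeSet, SimpleGraph.Subgraph.coe_adj] at hy
      simpa using G'.adj_sub hy
  calc G'.coe.edgeSet.ncard
      = ((Sym2.map (Subtype.val : G'.verts → β)) '' G'.coe.edgeSet).ncard := by
        rw [Set.ncard_image_of_injective _ (Sym2.map.injective Subtype.val_injective)]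
    _ ≤ G.edgeSet.ncard := Set.ncard_le_ncard hmap (Set.toFinite _)

/-- Monotonicity of the relative Turán density in a fixed host graph. -/
lemma relTuranDensityIn_mono {α α' β : Type*} [Preorder α] [Preorder α'] [Preorder β]
    [Fintype β] {F : SimpleGraph α} {H : SimpleGraph α'} (G : SimpleGraph β)
    (hFH : ContainsOrderedCopy F H) :
    relTuranDensityIn F G ≤ relTuranDensityIn H G := by
  unfold relTuranDensityIn
  set SF := {r : ℝ | ∃ G' : G.Subgraph, ¬ ContainsOrderedCopy F G'.coe ∧
    r = (edgeCount G'.coe : ℝ) / (edgeCount G : ℝ)} with hSF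
  set SH := {r : ℝ | ∃ G' : G.Subgraph, ¬ ContainsOrderedCopy H G'.coe ∧
    r = (edgeCount G'.coe : ℝ) / (edgeCount G : ℝ)} with hSH
  have hsub : SF ⊆ SH := by
    rintro r ⟨G', hfree, rfl⟩
    exact ⟨G', fun hc => hfree (containsOrderedCopy_trans hFH hc), rfl⟩
  have hbddH : BddAbove SH := by
    refine ⟨1, ?_⟩
    rintro r ⟨G', -, rfl⟩
    by_cases hzero : (edgeCount G : ℝ) = 0
    · rw [hzero, div_zero]; norm_num
    · have hpos : (0 : ℝ) < (edgeCount G : ℝ) :=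
        lt_of_le_of_ne (Nat.cast_nonneg _) (Ne.symm hzero)
      exact (div_le_one hpos).mpr (Nat.cast_le.mpr (edgeCount_subgraph_le G G'))
  by_cases hne : SF.Nonempty
  · exact csSup_le_csSup hbddH hne hsub
  · rw [Set.not_nonempty_iff_eq_empty] at hne
    rw [hne, Real.sSup_empty]
    refine Real.sSup_nonneg ?_
    rintro r ⟨G', -, rfl⟩
    positivity

/-- `ρ_<(F, G)` is nonnegative. -/
lemma relTuranDensityIn_nonneg {α β : Type*} [Preorder α] [Preorder β]
    (F : SimpleGraph α) (G : SimpleGraph β) : 0 ≤ relTuranDensityIn F G := by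
  refine Real.sSup_nonneg ?_
  rintro r ⟨G', -, rfl⟩
  positivity

/-- Every ordered graph `F` on `k` vertices with no monotone path of length
two satisfies `ρ_<(F) ≤ ρ_<(H_k)`. -/
theorem rho_le_rho_Hk
    {α : Type*} [Fintype α] [LinearOrder α] (F : SimpleGraph α)
    (k : ℕ) (hk : Fintype.card α = k)
    (hF : ¬ HasMonotonePathTwo F) :
    relTuranDensity F ≤ relTuranDensity (Hgraph k) := by
  have hFH : ContainsOrderedCopy F (Hgraph k) := containsOrderedCopy_Hgraph F k hk hF
  unfold relTuranDensity
  have hbdd : BddBelow {r : ℝ | ∃ (n : ℕ) (G : SimpleGraph (Fin n)),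
      1 ≤ edgeCount G ∧ r = relTuranDensityIn F G} := by
    refine ⟨0, ?_⟩
    rintro r ⟨n, G, -, rfl⟩
    exact relTuranDensityIn_nonneg F G
  have hneH : {r : ℝ | ∃ (n : ℕ) (G : SimpleGraph (Fin n)),
      1 ≤ edgeCount G ∧ r = relTuranDensityIn (Hgraph k) G}.Nonempty := by
    refine ⟨relTuranDensityIn (Hgraph k) (⊤ : SimpleGraph (Fin 2)), 2, ⊤, ?_, rfl⟩
    have hmem : s(0, 1) ∈ (⊤ : SimpleGraph (Fin 2)).edgeSet := by
      simp [SimpleGraph.mem_edgeSet]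
    have := (Set.ncard_pos (Set.toFinite _)).mpr ⟨s(0, 1), hmem⟩
    unfold edgeCount
    omega
  refine le_csInf hneH ?_
  rintro r ⟨n, G, hG, rfl⟩
  have hmem : relTuranDensityIn F G ∈ {r : ℝ | ∃ (n : ℕ) (G : SimpleGraph (Fin n)),
      1 ≤ edgeCount G ∧ r = relTuranDensityIn F G} := ⟨n, G, hG, rfl⟩
  exact le_trans (csInf_le hbdd hmem) (relTuranDensityIn_mono G hFH)
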